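/- Let G = (V,E) be a connected graph, Ĝ = (V, E∪F) an augmentation, and E' ⊆ E ∪ F such that G' = (V, E') is connected. Then LMC(G', Ĝ) ⊆ LMC(G, Ĝ) if and only if E' ⊆ E. -/

import Mathlib

open Finset

open scoped Classical

variable {V : Type*}

/-- A decomposition of a graph `G`: a partition of the node set all of whose blocks
induce connected subgraphs. -/
def IsDecomposition (G : SimpleGraph V) (P : Set (Set V)) : Prop :=
  Setoid.IsPartition P ∧ ∀ U ∈ P, (G.induce U).Connected

/-- Two nodes lie in a common block of `P`. -/
def SameBlock (P : Set (Set V)) (u v : V) : Prop :=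
  ∃ U ∈ P, u ∈ U ∧ v ∈ U

/-- The edge `e` straddles two distinct blocks of `P`. -/
def Crosses (P : Set (Set V)) (e : Sym2 V) : Prop :=
  ∃ u v, e = s(u, v) ∧ ¬ SameBlock P u v

/-- The multicut of `G` induced by a decomposition `P`. -/
def inducedMulticut (G : SimpleGraph V) (P : Set (Set V)) : Set (Sym2 V) :=
  {e | e ∈ G.edgeSet ∧ Crosses P e}

/-- `M` is a multicut of `G`. -/
def IsMulticut (G : SimpleGraph V) (M : Set (Sym2 V)) : Prop :=
  ∃ P, IsDecomposition G P ∧ M = inducedMulticut G P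

/-- The characteristic vector (in the ambient space `Sym2 V → ℝ`, with coordinates
outside the edge set of `H` pinned to `0`) of the multicut of `H` induced by `P`. -/
noncomputable def multicutVec (H : SimpleGraph V) (P : Set (Set V)) : Sym2 V → ℝ :=
  fun e => if e ∈ H.edgeSet ∧ Crosses P e then 1 else 0

/-- Characteristic vectors of multicuts of `H` lifted from `G`. -/
def liftedVectors (G H : SimpleGraph V) : Set (Sym2 V → ℝ) :=
  {x | ∃ P, IsDecomposition G P ∧ x = multicutVec H P}

/-- The lifted multicut polytope with respect to `G` and `H`. -/
def LMC (G H : SimpleGraph V) : Set (Sym2 V → ℝ) :=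
  convexHull ℝ (liftedVectors G H)

/-- The inequality `f x ≤ b` is valid for `P` and its equality set has affine dimension
`|E ∪ F| - 1`, i.e. one less than the dimension of the corresponding lifted multicut
polytope for the augmented graph `H`. -/
def DefinesFacet (H : SimpleGraph V) (P : Set (Sym2 V → ℝ))
    (f : (Sym2 V → ℝ) → ℝ) (b : ℝ) : Prop :=
  (∀ x ∈ P, f x ≤ b) ∧
  Module.finrank ℝ (affineSpan ℝ {x | x ∈ P ∧ f x = b}).direction + 1 = Nat.card H.edgeSet

/-- A decomposition of a subgraph is a decomposition of the larger graph. -/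
lemma isDecomposition_mono {G G' : SimpleGraph V} (h : G' ≤ G) {P : Set (Set V)}
    (hP : IsDecomposition G' P) : IsDecomposition G P := by
  refine ⟨hP.1, fun U hU => (hP.2 U hU).mono ?_⟩
  intro a b hab
  exact h hab

/-- If a block containing two distinct vertices induces a connected graph, there is an
edge of `G` inside the block. -/
lemma exists_adj_of_induce_connected {G : SimpleGraph V} {U : Set V}
    (hU : (G.induce U).Connected) {u v : V} (hu : u ∈ U) (hv : v ∈ U) (huv : u ≠ v) :
    ∃ a b, a ∈ U ∧ b ∈ U ∧ G.Adj a b := by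
  obtain ⟨w⟩ := hU.preconnected ⟨u, hu⟩ ⟨v, hv⟩
  have hnil : ¬ w.Nil := SimpleGraph.Walk.not_nil_of_ne (by simpa [Subtype.ext_iff] using huv)
  have hadj := w.adj_snd hnil
  exact ⟨u, (w.getVert 1 : ↥U), hu, (w.getVert 1).2, hadj⟩

/-- Each coordinate of `multicutVec` lies in `[0,1]`. -/
lemma multicutVec_mem_Icc (H : SimpleGraph V) (P : Set (Set V)) (f : Sym2 V) :
    0 ≤ multicutVec H P f ∧ multicutVec H P f ≤ 1 := by
  unfold multicutVec
  split <;> norm_num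

/-- for connected `G'` with edge set contained in that of the augmentation
`Gh`, one has `LMC(G', Gh) ⊆ LMC(G, Gh)` iff `E' ⊆ E`. -/
theorem lmc_subset_iff
    {V : Type*} [Fintype V] (G G' Gh : SimpleGraph V)
    (hG : G.Connected) (hG' : G'.Connected)
    (hle : G ≤ Gh) (hle' : G' ≤ Gh) :
    LMC G' Gh ⊆ LMC G Gh ↔ G' ≤ G := by
  constructor
  · intro hsub u v huv
    by_contra hGuv
    have hne : u ≠ v := G'.ne_of_adj huv
    set e : Sym2 V := s(u, v) with he
    have heGh : e ∈ Gh.edgeSet := hle' huv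
    -- the partition with blocks {u,v} and singletons
    set P : Set (Set V) := insert {u, v} {S | ∃ w, w ≠ u ∧ w ≠ v ∧ S = {w}} with hPdef
    have hblock : ({u, v} : Set V) ∈ P := Set.mem_insert _ _
    have hPpart : Setoid.IsPartition P := by
      constructor
      · rintro (h | ⟨w, -, -, h⟩)
        · exact absurd h.symm (Set.insert_nonempty _ _).ne_empty
        · exact absurd h.symm (Set.singleton_ne_empty _)
      · intro a
        by_cases ha : a = u ∨ a = v
        · refine ⟨{u, v}, ⟨hblock, by
            rcases ha with rfl | rfl
            · exact Set.mem_insert _ _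
            · exact Set.mem_insert_of_mem _ rfl⟩, ?_⟩
          rintro S ⟨(hS | ⟨w, hwu, hwv, hS⟩), haS⟩
          · exact hS
          · subst hS
            rcases ha with h | h <;> simp_all
        · push_neg at ha
          refine ⟨{a}, ⟨Set.mem_insert_of_mem _ ⟨a, ha.1, ha.2, rfl⟩, rfl⟩, ?_⟩
          rintro S ⟨(hS | ⟨w, hwu, hwv, hS⟩), haS⟩
          · subst hS
            rcases haS with h | h
            · exact absurd h ha.1
            · exact absurd h ha.2
          · subst hS
            simp_all
    have hPdec : IsDecomposition G' P := by
      refine ⟨hPpart, ?_⟩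
      rintro U (hU | ⟨w, hwu, hwv, hU⟩)
      · subst hU
        haveI : Nonempty ↥({u, v} : Set V) := ⟨⟨u, Set.mem_insert _ _⟩⟩
        refine ⟨?_⟩
        rintro ⟨x, hx0⟩ ⟨y, hy0⟩
        simp only [Set.mem_insert_iff, Set.mem_singleton_iff] at hx0 hy0
        rcases hx0 with hx | hx <;> rcases hy0 with hy | hy
        · subst hx; subst hy; rfl
        · subst hx; subst hy
          exact SimpleGraph.Adj.reachable (by simpa using huv)
        · subst hx; subst hy
          exact SimpleGraph.Adj.reachable (by simpa using huv.symm)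
        · subst hx; subst hy; rfl
      · subst hU
        haveI : Nonempty ↥({w} : Set V) := ⟨⟨w, rfl⟩⟩
        refine ⟨?_⟩
        rintro ⟨x, hx⟩ ⟨y, hy⟩
        simp only [Set.mem_singleton_iff] at hx hy
        subst hx
        cases hy
        rfl
    -- the separating affine functional
    set L : (Sym2 V → ℝ) → ℝ :=
      fun y => ∑ f : Sym2 V,
        (if f ∈ Gh.edgeSet then (if f = e then (1 : ℝ) else -1) * y f else 0) with hLdef
    set c : ℝ := ∑ f : Sym2 V,
      (if f ∈ Gh.edgeSet then (if f = e then (0 : ℝ) else 1) else 0) with hcdef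
    have hL : IsLinearMap ℝ L := by
      constructor
      · intro x y
        rw [hLdef]
        simp only
        rw [← Finset.sum_add_distrib]
        refine Finset.sum_congr rfl fun f _ => ?_
        simp only [Pi.add_apply]
        split_ifs <;> ring
      · intro a x
        rw [hLdef]
        simp only [smul_eq_mul]
        rw [Finset.mul_sum]
        refine Finset.sum_congr rfl fun f _ => ?_
        simp only [Pi.smul_apply, smul_eq_mul]
        split_ifs <;> ring
    -- rewriting the functional as a sum of terms
    have hsum : ∀ y : Sym2 V → ℝ,
        c + L y = ∑ f : Sym2 V,
          (if f ∈ Gh.edgeSet then (if f = e then y f else 1 - y f) else 0) := by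
      intro y
      rw [hcdef, hLdef]
      simp only
      rw [← Finset.sum_add_distrib]
      refine Finset.sum_congr rfl fun f _ => ?_
      split_ifs <;> ring
    -- the inequality `1 - c ≤ L y` is valid for LMC G Gh
    have hvalid : liftedVectors G Gh ⊆ {y | 1 - c ≤ L y} := by
      rintro y ⟨Q, hQ, rfl⟩
      have hterm_nonneg : ∀ f : Sym2 V, f ∈ Finset.univ → (0 : ℝ) ≤
          (if f ∈ Gh.edgeSet then
            (if f = e then multicutVec Gh Q f else 1 - multicutVec Gh Q f) else 0) := by
        intro f _
        obtain ⟨h0, h1⟩ := multicutVec_mem_Icc Gh Q f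
        split_ifs <;> linarith
      -- find a coordinate with term 1
      have key : ∃ j : Sym2 V,
          (if j ∈ Gh.edgeSet then
            (if j = e then multicutVec Gh Q j else 1 - multicutVec Gh Q j) else 0) = 1 := by
        by_cases hcr : Crosses Q e
        · refine ⟨e, ?_⟩
          rw [if_pos heGh, if_pos rfl]
          unfold multicutVec
          rw [if_pos ⟨heGh, hcr⟩]
        · -- u and v lie in a common block of Q; find a G-edge inside, not equal to e
          have hsb : SameBlock Q u v := by
            by_contra hsb
            exact hcr ⟨u, v, rfl, hsb⟩
          obtain ⟨U, hUQ, hu, hv⟩ := hsb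
          obtain ⟨a, b, haU, hbU, hab⟩ :=
            exists_adj_of_induce_connected (hQ.2 U hUQ) hu hv hne
          refine ⟨s(a, b), ?_⟩
          have habGh : s(a, b) ∈ Gh.edgeSet := hle hab
          have hnec : s(a, b) ≠ e := by
            intro hEq
            rw [he, Sym2.eq_iff] at hEq
            rcases hEq with ⟨rfl, rfl⟩ | ⟨rfl, rfl⟩
            · exact hGuv hab
            · exact hGuv hab.symm
          rw [if_pos habGh, if_neg hnec]
          have hnc : ¬ Crosses Q s(a, b) := by
            rintro ⟨x, y, hxy, hnsb⟩
            rw [Sym2.eq_iff] at hxy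
            rcases hxy with ⟨rfl, rfl⟩ | ⟨rfl, rfl⟩
            · exact hnsb ⟨U, hUQ, haU, hbU⟩
            · exact hnsb ⟨U, hUQ, hbU, haU⟩
          have : multicutVec Gh Q s(a, b) = 0 := by
            unfold multicutVec
            rw [if_neg]
            rintro ⟨-, h⟩
            exact hnc h
          rw [this]; ring
        -- end
      obtain ⟨j, hj⟩ := key
      have h1le : (1 : ℝ) ≤ ∑ f : Sym2 V,
          (if f ∈ Gh.edgeSet then
            (if f = e then multicutVec Gh Q f else 1 - multicutVec Gh Q f) else 0) := by
        calc (1 : ℝ) = _ := hj.symm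
        _ ≤ _ := Finset.single_le_sum hterm_nonneg (Finset.mem_univ j)
      rw [← hsum] at h1le
      simp only [Set.mem_setOf_eq]
      linarith
    have hconv : Convex ℝ {y : Sym2 V → ℝ | 1 - c ≤ L y} := convex_halfSpace_ge hL _
    -- the vector of P lies in LMC G' Gh, hence in LMC G Gh, hence in the halfspace
    have hxP : multicutVec Gh P ∈ LMC G Gh :=
      hsub (subset_convexHull ℝ _ ⟨P, hPdec, rfl⟩)
    have hin : 1 - c ≤ L (multicutVec Gh P) :=
      convexHull_min hvalid hconv hxP
    -- but the value of the functional at multicutVec Gh P is 0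
    have hP0 : c + L (multicutVec Gh P) = 0 := by
      rw [hsum]
      refine Finset.sum_eq_zero fun f _ => ?_
      by_cases h1 : f ∈ Gh.edgeSet
      · rw [if_pos h1]
        by_cases h2 : f = e
        · subst h2
          rw [if_pos rfl]
          have hnc : ¬ Crosses P e := by
            rintro ⟨x, y, hxy, hnsb⟩
            rw [he, Sym2.eq_iff] at hxy
            rcases hxy with ⟨rfl, rfl⟩ | ⟨rfl, rfl⟩
            · exact hnsb ⟨{u, v}, hblock, by simp, by simp⟩
            · exact hnsb ⟨{u, v}, hblock, by simp, by simp⟩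
          unfold multicutVec
          rw [if_neg]
          rintro ⟨-, h⟩
          exact hnc h
        · rw [if_neg h2]
          have hcr : Crosses P f := by
            induction f using Sym2.ind with
            | _ a b =>
              have hab : a ≠ b := by
                intro hEq
                subst hEq
                exact Gh.irrefl (Gh.mem_edgeSet.mp h1)
              refine ⟨a, b, rfl, ?_⟩
              rintro ⟨U, hUP, haU, hbU⟩
              rcases hUP with hU | ⟨w, hwu, hwv, hU⟩
              · subst hU
                rcases haU with rfl | haU <;> rcases hbU with rfl | hbU
                · exact hab rfl
                · simp only [Set.mem_singleton_iff] at hbU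
                  subst hbU
                  exact h2 rfl
                · simp only [Set.mem_singleton_iff] at haU
                  subst haU
                  exact h2 (Sym2.eq_swap)
                · simp only [Set.mem_singleton_iff] at haU hbU
                  exact hab (haU.trans hbU.symm)
              · subst hU
                simp only [Set.mem_singleton_iff] at haU hbU
                exact hab (haU.trans hbU.symm)
          have : multicutVec Gh P f = 1 := by
            unfold multicutVec
            rw [if_pos ⟨h1, hcr⟩]
          rw [this]; ring
      · rw [if_neg h1]
    linarith
  · intro h
    apply convexHull_mono
    rintro x ⟨P, hP, rfl⟩
    exact ⟨P, isDecomposition_mono h hP, rfl⟩
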